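/- For every odd natural number n, the model space associated with the n-matching π given by π(2j) = 2j+1 for all j ∈ {0,...,(n-1)/2} is homeomorphic to the n-sphere Sⁿ. -/

import Mathlib

open Finsupp

noncomputable section

/-- The old Mathlib `SimplexCategory.toTopObj` (removed upstream), restored with its old meaning. -/
def SimplexCategory.toTopObj (x : SimplexCategory) : Set (Fin (x.len + 1) → NNReal) :=
  { f | ∑ i, f i = 1 }

/-- The old Mathlib `SimplexCategory.toTopMap` (removed upstream), restored with its old meaning. -/
def SimplexCategory.toTopMap {x y : SimplexCategory} (f : x ⟶ y) (g : x.toTopObj) :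
    y.toTopObj :=
  ⟨fun i => ∑ j ∈ Finset.univ.filter (fun j => f.toOrderHom j = i), g.1 j, by
    show ∑ i, ∑ j ∈ Finset.univ.filter (fun j => f.toOrderHom j = i), g.1 j = 1
    rw [Finset.sum_fiberwise]
    exact g.2⟩

theorem SimplexCategory.continuous_toTopMap {x y : SimplexCategory} (f : x ⟶ y) :
    Continuous (SimplexCategory.toTopMap f) :=
  Continuous.subtype_mk (continuous_pi fun _ => continuous_finset_sum _ fun j _ =>
    (continuous_apply j).comp continuous_subtype_val) _

/-- The topological standard `n`-simplex. -/
abbrev TopSimplex (n : ℕ) : Type :=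
  (SimplexCategory.mk n).toTopObj

/-- Singular `n`-simplices on `X`. -/
abbrev SingularSimplex (n : ℕ) (X : Type*) [TopologicalSpace X] : Type _ :=
  C(TopSimplex n, X)

/-- Singular `n`-chains on `X` with coefficients in `R`. -/
abbrev SC (R : Type*) [Ring R] (n : ℕ) (X : Type*) [TopologicalSpace X] : Type _ :=
  SingularSimplex n X →₀ R

/-- The inclusion of the `j`-th face of the standard `(n+1)`-simplex. -/
def faceIncl (n : ℕ) (j : Fin (n + 2)) : C(TopSimplex n, TopSimplex (n + 1)) :=
  ⟨SimplexCategory.toTopMap (SimplexCategory.δ j), SimplexCategory.continuous_toTopMap _⟩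

/-- The `j`-th face of a singular `(n+1)`-simplex. -/
def sface {n : ℕ} {X : Type*} [TopologicalSpace X] (j : Fin (n + 2))
    (σ : SingularSimplex (n + 1) X) : SingularSimplex n X :=
  σ.comp (faceIncl n j)

/-- The singular boundary operator. -/
def bdry (R : Type*) [Ring R] {n : ℕ} (X : Type*) [TopologicalSpace X] :
    SC R (n + 1) X →+ SC R n X :=
  Finsupp.liftAddHom fun σ =>
    ∑ j : Fin (n + 2), (Finsupp.singleAddHom (sface j σ)).comp
      (AddMonoidHom.mulLeft ((-1 : R) ^ (j : ℕ)))

/-- The subgroup of singular cycles. -/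
def cycles (R : Type*) [Ring R] : (n : ℕ) → (X : Type*) → [TopologicalSpace X] →
    AddSubgroup (SC R n X)
  | 0, _, _ => ⊤
  | (_ + 1), X, _ => (bdry R X).ker

/-- The subgroup of singular boundaries. -/
def bdries (R : Type*) [Ring R] (n : ℕ) (X : Type*) [TopologicalSpace X] :
    AddSubgroup (SC R n X) :=
  (bdry R (n := n) X).range

/-- Singular homology of `X` in degree `n` with coefficients in `R`. -/
abbrev SH (R : Type*) [Ring R] (n : ℕ) (X : Type*) [TopologicalSpace X] : Type _ :=
  cycles R n X ⧸ ((bdries R n X).addSubgroupOf (cycles R n X))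

/-- The homology class of a cycle. -/
def hcls {R : Type*} [Ring R] {n : ℕ} {X : Type*} [TopologicalSpace X]
    (c : SC R n X) (hc : c ∈ cycles R n X) : SH R n X :=
  QuotientAddGroup.mk ⟨c, hc⟩

lemma mem_cycles_of {R : Type*} [Ring R] {n : ℕ} {X : Type*} [TopologicalSpace X]
    {c : SC R (n + 1) X} (hc : bdry R X c = 0) : c ∈ cycles R (n + 1) X :=
  hc

/-- The chain map induced by a continuous map. -/
def cmap (R : Type*) [Ring R] {n : ℕ} {X Y : Type*} [TopologicalSpace X] [TopologicalSpace Y]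
    (f : C(X, Y)) : SC R n X →+ SC R n Y :=
  Finsupp.liftAddHom fun σ => Finsupp.singleAddHom (f.comp σ)

lemma sface_comp {n : ℕ} {X Y : Type*} [TopologicalSpace X] [TopologicalSpace Y]
    (f : C(X, Y)) (j : Fin (n + 2)) (σ : SingularSimplex (n + 1) X) :
    sface j (f.comp σ) = f.comp (sface j σ) := rfl

lemma cmap_bdry (R : Type*) [Ring R] {n : ℕ} {X Y : Type*} [TopologicalSpace X]
    [TopologicalSpace Y] (f : C(X, Y)) (c : SC R (n + 1) X) :
    bdry R Y (cmap R f c) = cmap R f (bdry R X c) := by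
  have : (bdry R Y).comp (cmap R (n := n + 1) f) = (cmap R f).comp (bdry R X) := by
    refine Finsupp.addHom_ext fun σ a => ?_
    simp only [AddMonoidHom.comp_apply, bdry, cmap, Finsupp.liftAddHom_apply_single,
      AddMonoidHom.finset_sum_apply, AddMonoidHom.coe_comp, Function.comp_apply,
      AddMonoidHom.coe_mulLeft, Finsupp.singleAddHom_apply, map_sum, sface_comp]
  exact DFunLike.congr_fun this c

lemma cmap_mem_cycles {R : Type*} [Ring R] {n : ℕ} {X Y : Type*} [TopologicalSpace X]
    [TopologicalSpace Y] (f : C(X, Y)) {c : SC R n X} (hc : c ∈ cycles R n X) :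
    cmap R f c ∈ cycles R n Y := by
  cases n with
  | zero => trivial
  | succ n =>
      have hc' : bdry R X c = 0 := hc
      show bdry R Y (cmap R f c) = 0
      rw [cmap_bdry, hc', map_zero]

/-- The map induced on homology by a continuous map. -/
def hmap (R : Type*) [Ring R] {n : ℕ} {X Y : Type*} [TopologicalSpace X] [TopologicalSpace Y]
    (f : C(X, Y)) : SH R n X →+ SH R n Y :=
  QuotientAddGroup.map _ _
    (AddMonoidHom.codRestrict ((cmap R f).comp (cycles R n X).subtype) (cycles R n Y)
      fun c => cmap_mem_cycles f c.2)
    (by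
      rintro ⟨c, hc⟩ hmem
      have hb : c ∈ bdries R n X := hmem
      obtain ⟨b, hb⟩ := hb
      show _ ∈ (bdries R n Y).addSubgroupOf _
      refine ⟨cmap R f b, ?_⟩
      simp only [AddMonoidHom.codRestrict_apply, AddMonoidHom.comp_apply,
        AddSubgroup.coe_subtype]
      rw [cmap_bdry, hb])

/-- The `ℓ¹`-norm of an integral chain. -/
def norm1 {n : ℕ} {X : Type*} [TopologicalSpace X] (c : SC ℤ n X) : ℕ :=
  c.sum fun _ a => a.natAbs

/-- The integral `ℓ¹`-seminorm of an integral homology class. -/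
def clnorm {n : ℕ} {X : Type*} [TopologicalSpace X] (α : SH ℤ n X) : ℕ :=
  sInf { m | ∃ c : cycles ℤ n X, (QuotientAddGroup.mk c : SH ℤ n X) = α ∧ norm1 c.1 = m }

/-- A fundamental class: a generator of the infinite cyclic top homology of an oriented
closed connected manifold. -/
structure FundClass (n : ℕ) (M : Type*) [TopologicalSpace M] where
  cls : SH ℤ n M
  spans : ∀ x : SH ℤ n M, ∃ k : ℤ, x = k • cls
  torsionfree : ∀ k : ℤ, k • cls = 0 → k = 0

/-- The integral simplicial volume. -/
def isv (n : ℕ) (M : Type*) [TopologicalSpace M] (φ : FundClass n M) : ℕ :=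
  clnorm φ.cls

/-- A matching on the faces of the standard `(n+1)`-simplex: a bijection from the
even-indexed faces onto the odd-indexed faces. -/
def IsMatching (n : ℕ) (π : Fin (n + 2) → Fin (n + 2)) : Prop :=
  Set.BijOn π { j | Even (j : ℕ) } { j | Odd (j : ℕ) }

/-- The gluing relation of the model space of a matching. -/
def matchRel (n : ℕ) (π : Fin (n + 2) → Fin (n + 2)) (x y : TopSimplex (n + 1)) : Prop :=
  ∃ j : Fin (n + 2), Even (j : ℕ) ∧ ∃ t : TopSimplex n,
    x = faceIncl n j t ∧ y = faceIncl n (π j) t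

/-- The model space `M_π` of a matching `π`. -/
abbrev ModelSpace (n : ℕ) (π : Fin (n + 2) → Fin (n + 2)) : Type :=
  Quot (matchRel n π)

/-- The canonical projection `σ_π : Δ^{n+1} → M_π`, a singular simplex on `M_π`. -/
def modelProj (n : ℕ) (π : Fin (n + 2) → Fin (n + 2)) :
    SingularSimplex (n + 1) (ModelSpace n π) :=
  ⟨Quot.mk _, continuous_quot_mk⟩

/-- The unreduced suspension of a space. -/
abbrev Susp (Y : Type*) [TopologicalSpace Y] : Type _ :=
  Quot (fun a b : Y × (Set.Icc (-1 : ℝ) 1) =>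
    ((a.2 : ℝ) = 1 ∧ (b.2 : ℝ) = 1) ∨ ((a.2 : ℝ) = -1 ∧ (b.2 : ℝ) = -1))

end

noncomputable section
namespace S6
open SimplexCategory
open scoped NNReal
attribute [local instance] CategoryTheory.ConcreteCategory.instFunLike

instance (x : SimplexCategory) : CoeFun x.toTopObj fun _ => Fin (x.len + 1) → ℝ≥0 :=
  ⟨fun f => (f : Fin (x.len + 1) → ℝ≥0)⟩

lemma coe_toTopMap {x y : SimplexCategory} (f : x ⟶ y) (g : x.toTopObj) (i : Fin (y.len + 1)) :
    (toTopMap f g : Fin (y.len + 1) → ℝ≥0) i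
      = ∑ j ∈ Finset.univ.filter (fun j => f.toOrderHom j = i), g.1 j := rfl

variable {n : ℕ}

lemma val_succAbove (j : Fin (n+2)) (m : Fin (n+1)) :
    ((j.succAbove m : Fin (n+2)) : ℕ) = if (m:ℕ) < (j:ℕ) then (m:ℕ) else (m:ℕ)+1 := by
  rw [Fin.succAbove]
  rcases lt_or_ge (m.castSucc) j with h | h
  · rw [if_pos h, if_pos (by simpa [Fin.lt_def] using h)]; rfl
  · rw [if_neg (not_lt.2 h), if_neg (by simp only [not_lt]; exact h)]; rfl

lemma delta_app (j : Fin (n+2)) (m : Fin (n+1)) : (δ j) m = j.succAbove m := rfl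

lemma faceIncl_self (j : Fin (n+2)) (t : TopSimplex n) :
    (faceIncl n j t) j = 0 := by
  classical
  show toTopMap (δ j) t j = 0
  rw [coe_toTopMap]
  refine Finset.sum_eq_zero fun m hm => ?_
  have := (Finset.mem_filter.1 hm).2
  exact absurd this (Fin.succAbove_ne j m)

lemma faceIncl_succAbove (j : Fin (n+2)) (t : TopSimplex n) (m : Fin (n+1)) :
    (faceIncl n j t) (j.succAbove m) = t m := by
  classical
  show toTopMap (δ j) t (j.succAbove m) = t m
  rw [coe_toTopMap]
  refine Finset.sum_eq_single_of_mem m ?_ ?_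
  · exact Finset.mem_filter.2 ⟨Finset.mem_univ m, rfl⟩
  · intro m' hm' hne
    have h := (Finset.mem_filter.1 hm').2
    exact absurd (Fin.succAbove_right_injective (p := j) h) hne

/-- Swap two coordinates of a point of the simplex. -/
def swapF (p q : Fin (n+2)) (x : TopSimplex (n+1)) : TopSimplex (n+1) :=
  ⟨fun i => x (Equiv.swap p q i), by
    show ∑ i : Fin (n+2), x (Equiv.swap p q i) = 1
    rw [Equiv.sum_comp (Equiv.swap p q) (fun i => x i)]; exact x.2⟩

lemma swapF_apply (p q : Fin (n+2)) (x : TopSimplex (n+1)) (i : Fin (n+2)) :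
    swapF p q x i = x (Equiv.swap p q i) := rfl

lemma swapF_swapF (p q : Fin (n+2)) (x : TopSimplex (n+1)) :
    swapF p q (swapF p q x) = x := by
  apply Subtype.ext; funext i
  show x (Equiv.swap p q (Equiv.swap p q i)) = x i
  rw [Equiv.swap_apply_self]

lemma face_exists (j : Fin (n+2)) (x : TopSimplex (n+1)) (hx : x j = 0) :
    ∃ t : TopSimplex n, x = faceIncl n j t := by
  refine ⟨⟨fun m => x (j.succAbove m), ?_⟩, ?_⟩
  · show ∑ m : Fin (n+1), x (j.succAbove m) = 1
    have h := Fin.sum_univ_succAbove (fun i : Fin (n+2) => (x i : ℝ≥0)) j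
    rw [show ∑ i : Fin (n+2), x i = 1 from x.2, hx, zero_add] at h
    exact h.symm
  · apply Subtype.ext; funext i
    rcases eq_or_ne i j with rfl | hij
    · rw [faceIncl_self]; exact hx
    · obtain ⟨m, hm⟩ := Fin.exists_succAbove_eq hij
      rw [← hm, faceIncl_succAbove]

lemma face_eq_swap (j : Fin (n+2)) (hj : (j:ℕ)+1 < n+2) (t : TopSimplex n) :
    swapF j ⟨(j:ℕ)+1, hj⟩ (faceIncl n j t) = faceIncl n ⟨(j:ℕ)+1, hj⟩ t := by
  set j' : Fin (n+2) := ⟨(j:ℕ)+1, hj⟩ with hj'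
  apply Subtype.ext; funext i
  rcases eq_or_ne i j' with rfl | hij
  · rw [faceIncl_self, swapF_apply, Equiv.swap_apply_right, faceIncl_self]
  · obtain ⟨m, hm⟩ := Fin.exists_succAbove_eq hij
    rw [← hm, faceIncl_succAbove, swapF_apply]
    have key : Equiv.swap j j' (j'.succAbove m) = j.succAbove m := by
      have h1 := val_succAbove j' m
      have h2 := val_succAbove j m
      rcases lt_trichotomy (m:ℕ) (j:ℕ) with h | h | h
      · have e1 : j'.succAbove m ≠ j := by
          rw [Fin.ne_iff_vne, h1, if_pos (by simp [hj']; omega)]; omega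
        have e2 : j'.succAbove m ≠ j' := Fin.succAbove_ne _ _
        rw [Equiv.swap_apply_of_ne_of_ne e1 e2]
        apply Fin.ext; rw [h1, h2, if_pos (by simp [hj']; omega), if_pos h]
      · have e1 : j'.succAbove m = j := by
          apply Fin.ext; rw [h1, if_pos (by simp [hj']; omega)]; omega
        rw [e1, Equiv.swap_apply_left]
        apply Fin.ext; rw [h2, if_neg (by omega)]; simp [hj']; omega
      · have e1 : j'.succAbove m ≠ j := by
          rw [Fin.ne_iff_vne, h1, if_neg (by simp [hj']; omega)]; omega
        have e2 : j'.succAbove m ≠ j' := Fin.succAbove_ne _ _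
        rw [Equiv.swap_apply_of_ne_of_ne e1 e2]
        apply Fin.ext; rw [h1, h2, if_neg (by simp [hj']; omega), if_neg (by omega)]
    rw [key, faceIncl_succAbove]

variable (π : Fin (n + 2) → Fin (n + 2))
  (hπ : ∀ j : Fin (n + 2), Even (j : ℕ) → (π j : ℕ) = (j : ℕ) + 1)

include hπ in
lemma quot_eq_swap (p : Fin (n+2)) (hp : (p:ℕ) % 2 = 0) (hp1 : (p:ℕ)+1 < n+2)
    (x : TopSimplex (n+1)) (hx : x p = 0 ∨ x ⟨(p:ℕ)+1, hp1⟩ = 0) :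
    Quot.mk (matchRel n π) x = Quot.mk _ (swapF p ⟨(p:ℕ)+1, hp1⟩ x) := by
  set p' : Fin (n+2) := ⟨(p:ℕ)+1, hp1⟩ with hp'
  have hπp : π p = p' := Fin.ext (by rw [hπ p (Nat.even_iff.2 hp)])
  rcases hx with hx | hx
  · obtain ⟨t, ht⟩ := face_exists p x hx
    apply Quot.sound
    exact ⟨p, Nat.even_iff.2 hp, t, ht, by rw [hπp, ← face_eq_swap p hp1 t, ← ht]⟩
  · have hswap0 : (swapF p p' x) p = 0 := by
      rw [swapF_apply, Equiv.swap_apply_left]; exact hx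
    obtain ⟨t, ht⟩ := face_exists p (swapF p p' x) hswap0
    have : Quot.mk (matchRel n π) (swapF p p' x) = Quot.mk _ (swapF p p' (swapF p p' x)) :=
      Quot.sound ⟨p, Nat.even_iff.2 hp, t, ht, by rw [hπp, ← face_eq_swap p hp1 t, ← ht]⟩
    rw [swapF_swapF] at this
    exact this.symm

instance (m : ℕ) : CompactSpace (TopSimplex m) := by
  rw [← isCompact_iff_compactSpace]
  have hsub : (SimplexCategory.mk m).toTopObj ⊆ Set.pi Set.univ (fun _ => Set.Icc (0:ℝ≥0) 1) := by
    intro f hf i _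
    have h1 : ∑ i, f i = 1 := hf
    exact ⟨zero_le, by rw [← h1]; exact Finset.single_le_sum (fun j _ => zero_le) (Finset.mem_univ i)⟩
  refine IsCompact.of_isClosed_subset (isCompact_univ_pi fun _ => isCompact_Icc) ?_ hsub
  have : (SimplexCategory.mk m).toTopObj = (fun f : Fin (m+1) → ℝ≥0 => ∑ i, f i) ⁻¹' {1} := rfl
  rw [this]
  exact (isClosed_singleton).preimage (continuous_finset_sum _ fun i _ => continuous_apply i)


def gg1 (a b : ℝ) : ℝ := a^2 - 6*a*b + b^2
def gg2 (a b : ℝ) : ℝ := 4*(b-a)*Real.sqrt (a*b)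

lemma gg_sq {a b : ℝ} (ha : 0 ≤ a) (hb : 0 ≤ b) :
    gg1 a b ^ 2 + gg2 a b ^ 2 = (a+b)^4 := by
  have h : Real.sqrt (a*b) ^ 2 = a*b := Real.sq_sqrt (mul_nonneg ha hb)
  unfold gg1 gg2; nlinarith [h]

lemma pow4_inj {a b : ℝ} (ha : 0 ≤ a) (hb : 0 ≤ b) (h : a^4 = b^4) : a = b := by
  rcases lt_trichotomy a b with hl | he | hl
  · exact absurd h (ne_of_lt (pow_lt_pow_left₀ hl ha (by norm_num)))
  · exact he
  · exact absurd h.symm (ne_of_lt (pow_lt_pow_left₀ hl hb (by norm_num)))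

lemma gg1_swap (a : ℝ) : gg1 a 0 = gg1 0 a := by unfold gg1; ring
lemma gg2_swap (a : ℝ) : gg2 a 0 = gg2 0 a := by
  unfold gg2; rw [mul_zero, zero_mul, Real.sqrt_zero]; ring

lemma gg_inj {a b a' b' : ℝ} (ha : 0 ≤ a) (hb : 0 ≤ b) (ha' : 0 ≤ a') (hb' : 0 ≤ b')
    (h1 : gg1 a b = gg1 a' b') (h2 : gg2 a b = gg2 a' b') :
    (a = a' ∧ b = b') ∨ (a = b' ∧ b = a' ∧ a*b = 0) := by
  have hs : a + b = a' + b' := by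
    apply pow4_inj (by linarith) (by linarith)
    rw [← gg_sq ha hb, ← gg_sq ha' hb', h1, h2]
  have hp : a*b = a'*b' := by unfold gg1 at h1; nlinarith
  have hfac : (a - a') * (a - b') = 0 := by nlinarith
  rcases mul_eq_zero.1 hfac with h | h
  · left
    constructor
    · linarith
    · linarith
  · rcases eq_or_ne a a' with h4 | h4
    · left; exact ⟨h4, by linarith⟩
    · right
      have hab' : a = b' := by linarith
      have hba' : b = a' := by linarith
      refine ⟨hab', hba', ?_⟩
      -- g2 : 4(b-a)√(ab) = 4(b'-a')√(a'b') = 4(a-b)√(ab)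
      have hss : Real.sqrt (a*b) = Real.sqrt (a'*b') := by rw [hp]
      unfold gg2 at h2
      rw [← hss, ← hab', ← hba'] at h2
      have h8 : (b - a) * Real.sqrt (a*b) = 0 := by linear_combination h2/8
      rcases mul_eq_zero.1 h8 with h9 | h9
      · exact absurd (by linarith : a = a') h4
      · have h10 : a * b ≤ 0 := Real.sqrt_eq_zero'.1 h9
        exact le_antisymm h10 (mul_nonneg ha hb)

/-- the "d" for the inverse construction -/
def dd (u v s : ℝ) : ℝ :=
  if Real.sqrt (u^2+v^2) ≤ u then s
  else s^2*v/(4*Real.sqrt (u^2+v^2)*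
    Real.sqrt (s^2*(Real.sqrt (u^2+v^2)-u)/(8*Real.sqrt (u^2+v^2))))

def aa (u v s : ℝ) : ℝ := (s - dd u v s)/2
def bb (u v s : ℝ) : ℝ := (s + dd u v s)/2

lemma aabb_zero (u v : ℝ) : aa u v 0 = 0 ∧ bb u v 0 = 0 := by
  unfold aa bb dd
  split <;> norm_num

lemma surj_helper (u v s : ℝ) (hs : 0 ≤ s) (hr : 0 < Real.sqrt (u^2+v^2)) :
    0 ≤ aa u v s ∧ 0 ≤ bb u v s ∧ aa u v s + bb u v s = s ∧
    gg1 (aa u v s) (bb u v s) = s^2*u/Real.sqrt (u^2+v^2) ∧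
    gg2 (aa u v s) (bb u v s) = s^2*v/Real.sqrt (u^2+v^2) := by
  set r := Real.sqrt (u^2+v^2) with hrdef
  have hr2 : r^2 = u^2 + v^2 := Real.sq_sqrt (by positivity)
  have hur : u ≤ r := by nlinarith [sq_nonneg (r - u), sq_nonneg v]
  have habs : aa u v s + bb u v s = s := by unfold aa bb; ring
  rcases le_or_gt r u with hcase | hcase
  · -- u = r, v = 0
    have huu : u = r := le_antisymm hur hcase
    have hv : v = 0 := by nlinarith
    have hd : dd u v s = s := if_pos hcase
    have haa : aa u v s = 0 := by unfold aa; rw [hd]; ring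
    have hbb : bb u v s = s := by unfold bb; rw [hd]; ring
    refine ⟨by rw [haa], by rw [hbb]; exact hs, habs, ?_, ?_⟩
    · rw [haa, hbb]; unfold gg1; rw [huu]; field_simp; ring
    · rw [haa, hbb, hv]; unfold gg2; simp
  · -- u < r
    rcases eq_or_lt_of_le hs with hs0 | hs0
    · -- s = 0
      obtain ⟨h1, h2⟩ := aabb_zero u v
      subst hs0
      rw [h1, h2]
      unfold gg1 gg2
      norm_num
    · set p := s^2*(r-u)/(8*r) with hpdef
      have hp : 0 < p := div_pos (mul_pos (pow_pos hs0 2) (sub_pos.2 hcase)) (by linarith)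
      have hsp : Real.sqrt p > 0 := Real.sqrt_pos.2 hp
      have hsp2 : Real.sqrt p ^ 2 = p := Real.sq_sqrt hp.le
      have hd : dd u v s = s^2*v/(4*r*Real.sqrt p) := by
        unfold dd; rw [if_neg (not_le.2 hcase)]
      set d := dd u v s with hddef
      have hd2 : d^2 = s^2*(r+u)/(2*r) := by
        have hden : (4*r*Real.sqrt p)^2 = 2*r*s^2*(r-u) := by
          rw [mul_pow, hsp2, hpdef]; field_simp; ring
        have hpos : (0:ℝ) < 2*r*s^2*(r-u) := by
          have := mul_pos (mul_pos hr (pow_pos hs0 2)) (sub_pos.2 hcase)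
          nlinarith
        rw [hd, div_pow, hden, div_eq_div_iff hpos.ne' (by positivity : (0:ℝ) < 2*r).ne']
        have hv2 : v^2 = r^2 - u^2 := by linarith
        linear_combination (2*r*s^4) * hv2
      have hd2le : d^2 ≤ s^2 := by
        rw [hd2, div_le_iff₀ (by positivity : (0:ℝ) < 2*r)]
        nlinarith
      have hdles : d ≤ s := by nlinarith
      have hdges : -s ≤ d := by nlinarith
      have haa0 : 0 ≤ aa u v s := by unfold aa; rw [← hddef]; linarith
      have hbb0 : 0 ≤ bb u v s := by unfold bb; rw [← hddef]; linarith
      have hab : aa u v s * bb u v s = p := by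
        have e1 : aa u v s * bb u v s = (s^2 - d^2)/4 := by unfold aa bb; rw [← hddef]; ring
        rw [e1, hd2, hpdef]
        field_simp
        ring
      refine ⟨haa0, hbb0, habs, ?_, ?_⟩
      · have e1 : gg1 (aa u v s) (bb u v s) = 2*d^2 - s^2 := by
          unfold gg1 aa bb; rw [← hddef]; ring
        rw [e1, hd2]
        field_simp
        ring
      · unfold gg2
        rw [hab]
        have ed : bb u v s - aa u v s = d := by unfold aa bb; rw [← hddef]; ring
        rw [ed, hd]
        field_simp


/-! ### Pairing machinery -/

def loI (_he : n % 2 = 0) (i : Fin (n+2)) : Fin (n+2) := ⟨2*((i:ℕ)/2), by omega⟩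
def hiI (he : n % 2 = 0) (i : Fin (n+2)) : Fin (n+2) := ⟨2*((i:ℕ)/2)+1, by omega⟩
def ptr (he : n % 2 = 0) (i : Fin (n+2)) : Fin (n+2) :=
  ⟨if (i:ℕ) % 2 = 0 then (i:ℕ)+1 else (i:ℕ)-1, by split_ifs <;> omega⟩

variable (he : n % 2 = 0)

lemma loI_val (i : Fin (n+2)) : ((loI he i : Fin (n+2)) : ℕ) = 2*((i:ℕ)/2) := rfl
lemma hiI_val (i : Fin (n+2)) : ((hiI he i : Fin (n+2)) : ℕ) = 2*((i:ℕ)/2)+1 := rfl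
lemma ptr_val (i : Fin (n+2)) :
    ((ptr he i : Fin (n+2)) : ℕ) = if (i:ℕ) % 2 = 0 then (i:ℕ)+1 else (i:ℕ)-1 := rfl

lemma ptr_invol : Function.Involutive (ptr he) := by
  intro i; apply Fin.ext
  rw [ptr_val, ptr_val]
  split_ifs <;> omega

/-- ptr as a permutation -/
def ptrE : Equiv.Perm (Fin (n+2)) := (ptr_invol he).toPerm

lemma ptrE_apply (i : Fin (n+2)) : ptrE he i = ptr he i := rfl

lemma ptr_div (i : Fin (n+2)) : ((ptr he i : Fin (n+2)) : ℕ)/2 = (i:ℕ)/2 := by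
  rw [ptr_val]; split_ifs <;> omega

lemma loI_div (i : Fin (n+2)) : ((loI he i : Fin (n+2)) : ℕ)/2 = (i:ℕ)/2 := by
  rw [loI_val]; omega

lemma hiI_div (i : Fin (n+2)) : ((hiI he i : Fin (n+2)) : ℕ)/2 = (i:ℕ)/2 := by
  rw [hiI_val]; omega

lemma loI_congr {i i' : Fin (n+2)} (h : (i:ℕ)/2 = (i':ℕ)/2) : loI he i = loI he i' := by
  apply Fin.ext; rw [loI_val, loI_val, h]

lemma hiI_congr {i i' : Fin (n+2)} (h : (i:ℕ)/2 = (i':ℕ)/2) : hiI he i = hiI he i' := by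
  apply Fin.ext; rw [hiI_val, hiI_val, h]

lemma loI_of_even {i : Fin (n+2)} (h : (i:ℕ) % 2 = 0) : loI he i = i :=
  Fin.ext (by rw [loI_val]; omega)

lemma hiI_of_even {i : Fin (n+2)} (h : (i:ℕ) % 2 = 0) : hiI he i = ptr he i :=
  Fin.ext (by rw [hiI_val, ptr_val, if_pos h]; omega)

lemma loI_of_odd {i : Fin (n+2)} (h : (i:ℕ) % 2 = 1) : loI he i = ptr he i :=
  Fin.ext (by rw [loI_val, ptr_val, if_neg (by omega : ¬ (i:ℕ)%2 = 0)]; omega)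

lemma hiI_of_odd {i : Fin (n+2)} (h : (i:ℕ) % 2 = 1) : hiI he i = i :=
  Fin.ext (by rw [hiI_val]; omega)

/-! ### The folding map -/

def Av (x : TopSimplex (n+1)) (i : Fin (n+2)) : ℝ := (x (loI he i) : ℝ)
def Bv (x : TopSimplex (n+1)) (i : Fin (n+2)) : ℝ := (x (hiI he i) : ℝ)
def sv (x : TopSimplex (n+1)) (i : Fin (n+2)) : ℝ := Av he x i + Bv he x i

lemma Av_nonneg (x : TopSimplex (n+1)) (i : Fin (n+2)) : 0 ≤ Av he x i := (x _).2
lemma Bv_nonneg (x : TopSimplex (n+1)) (i : Fin (n+2)) : 0 ≤ Bv he x i := (x _).2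

lemma Av_ptr (x : TopSimplex (n+1)) (i : Fin (n+2)) : Av he x (ptr he i) = Av he x i := by
  unfold Av; rw [loI_congr he (ptr_div he i)]
lemma Bv_ptr (x : TopSimplex (n+1)) (i : Fin (n+2)) : Bv he x (ptr he i) = Bv he x i := by
  unfold Bv; rw [hiI_congr he (ptr_div he i)]
lemma sv_ptr (x : TopSimplex (n+1)) (i : Fin (n+2)) : sv he x (ptr he i) = sv he x i := by
  unfold sv; rw [Av_ptr, Bv_ptr]

lemma ptr_parity (i : Fin (n+2)) (h : (i:ℕ) % 2 = 0) : ((ptr he i : Fin (n+2)) : ℕ) % 2 = 1 := by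
  rw [ptr_val, if_pos h]; omega

lemma ptr_parity' (i : Fin (n+2)) (h : (i:ℕ) % 2 = 1) : ((ptr he i : Fin (n+2)) : ℕ) % 2 = 0 := by
  rw [ptr_val, if_neg (by omega : ¬ (i:ℕ)%2 = 0)]; omega

def fF (x : TopSimplex (n+1)) : Fin (n+2) → ℝ := fun i =>
  if (i:ℕ) % 2 = 0 then gg1 (Av he x i) (Bv he x i) else gg2 (Av he x i) (Bv he x i)

def Nf (x : TopSimplex (n+1)) : ℝ := Real.sqrt (∑ i : Fin (n+2), fF he x i ^ 2)

def FF (x : TopSimplex (n+1)) : EuclideanSpace ℝ (Fin (n+2)) := WithLp.toLp 2 (fun i => fF he x i / Nf he x)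

lemma pair_sq (x : TopSimplex (n+1)) (i : Fin (n+2)) :
    fF he x i ^ 2 + fF he x (ptr he i) ^ 2 = sv he x i ^ 4 := by
  unfold fF sv
  rcases Nat.even_or_odd (i:ℕ) with h | h
  · have h0 := Nat.even_iff.1 h
    rw [if_pos h0, if_neg (by rw [ptr_parity he i h0]; omega), Av_ptr, Bv_ptr]
    exact gg_sq (Av_nonneg he x i) (Bv_nonneg he x i)
  · have h0 := Nat.odd_iff.1 h
    rw [if_neg (by omega), if_pos (ptr_parity' he i h0), Av_ptr, Bv_ptr]
    rw [add_comm]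
    exact gg_sq (Av_nonneg he x i) (Bv_nonneg he x i)

lemma sv_eq (x : TopSimplex (n+1)) (i : Fin (n+2)) :
    sv he x i = (x i : ℝ) + (x (ptr he i) : ℝ) := by
  unfold sv Av Bv
  rcases Nat.even_or_odd (i:ℕ) with h | h
  · rw [loI_of_even he (Nat.even_iff.1 h), hiI_of_even he (Nat.even_iff.1 h)]
  · rw [loI_of_odd he (Nat.odd_iff.1 h), hiI_of_odd he (Nat.odd_iff.1 h)]; ring

lemma sum_coe (x : TopSimplex (n+1)) : ∑ i : Fin (n+2), ((x i : ℝ≥0) : ℝ) = 1 := by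
  have h := show ∑ i : Fin (n+2), x i = 1 from x.2
  exact_mod_cast congrArg (fun t : ℝ≥0 => (t : ℝ)) h

lemma sum_sv (x : TopSimplex (n+1)) : ∑ i : Fin (n+2), sv he x i = 2 := by
  have h1 : ∑ i : Fin (n+2), sv he x i
      = ∑ i : Fin (n+2), ((x i : ℝ) + (x (ptrE he i) : ℝ)) :=
    Finset.sum_congr rfl fun i _ => sv_eq he x i
  rw [h1, Finset.sum_add_distrib, sum_coe,
    Equiv.sum_comp (ptrE he) (fun i => ((x i : ℝ≥0) : ℝ)), sum_coe]
  norm_num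

lemma Nf_sq (x : TopSimplex (n+1)) : Nf he x ^ 2 = ∑ i : Fin (n+2), fF he x i ^ 2 :=
  Real.sq_sqrt (Finset.sum_nonneg fun i _ => sq_nonneg _)

lemma two_Nf_sq (x : TopSimplex (n+1)) :
    2 * Nf he x ^ 2 = ∑ i : Fin (n+2), sv he x i ^ 4 := by
  have h1 : ∑ i : Fin (n+2), (fF he x i ^ 2 + fF he x (ptrE he i) ^ 2)
      = ∑ i : Fin (n+2), sv he x i ^ 4 :=
    Finset.sum_congr rfl fun i _ => pair_sq he x i
  rw [Finset.sum_add_distrib, Equiv.sum_comp (ptrE he) (fun i => fF he x i ^ 2)] at h1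
  rw [Nf_sq]; linarith

lemma Nf_pos (x : TopSimplex (n+1)) : 0 < Nf he x := by
  have hex : ∃ i : Fin (n+2), 0 < ((x i : ℝ≥0) : ℝ) := by
    by_contra hc
    push_neg at hc
    have : ∑ i : Fin (n+2), ((x i : ℝ≥0) : ℝ) ≤ 0 :=
      Finset.sum_nonpos fun i _ => hc i
    rw [sum_coe] at this; linarith
  obtain ⟨i, hi⟩ := hex
  have hsv : 0 < sv he x i := by
    rw [sv_eq]
    have := (x (ptr he i)).2
    positivity
  have hsum : 0 < ∑ i : Fin (n+2), sv he x i ^ 4 := by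
    have hle : sv he x i ^ 4 ≤ ∑ i : Fin (n+2), sv he x i ^ 4 :=
      Finset.single_le_sum (f := fun j => sv he x j ^ 4)
        (fun j _ => by positivity) (Finset.mem_univ i)
    exact lt_of_lt_of_le (pow_pos hsv 4) hle
  unfold Nf
  apply Real.sqrt_pos.2
  have := two_Nf_sq he x
  rw [Nf_sq] at this
  linarith

lemma norm_FF (x : TopSimplex (n+1)) : ‖FF he x‖ = 1 := by
  rw [EuclideanSpace.norm_eq]
  have hN := Nf_pos he x
  have : ∑ i : Fin (n+2), ‖FF he x i‖ ^ 2 = 1 := by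
    have h1 : ∀ i : Fin (n+2), ‖FF he x i‖ ^ 2 = fF he x i ^2 / Nf he x ^2 := fun i => by
      rw [Real.norm_eq_abs, sq_abs]; unfold FF; rw [div_pow]
    rw [Finset.sum_congr rfl fun i _ => h1 i, ← Finset.sum_div, ← Nf_sq, div_self (by positivity)]
  rw [this, Real.sqrt_one]

/-! ### Congruence helpers -/

lemma Av_congr (x : TopSimplex (n+1)) {i i' : Fin (n+2)} (h : (i:ℕ)/2 = (i':ℕ)/2) :
    Av he x i = Av he x i' := by unfold Av; rw [loI_congr he h]
lemma Bv_congr (x : TopSimplex (n+1)) {i i' : Fin (n+2)} (h : (i:ℕ)/2 = (i':ℕ)/2) :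
    Bv he x i = Bv he x i' := by unfold Bv; rw [hiI_congr he h]

lemma sv_nonneg (x : TopSimplex (n+1)) (i : Fin (n+2)) : 0 ≤ sv he x i :=
  add_nonneg (Av_nonneg he x i) (Bv_nonneg he x i)

lemma hiI_eq_mk (i : Fin (n+2)) (h : ((loI he i : Fin (n+2)):ℕ)+1 < n+2) :
    hiI he i = ⟨((loI he i : Fin (n+2)):ℕ)+1, h⟩ :=
  Fin.ext (by
    show ((hiI he i : Fin (n+2)):ℕ) = ((loI he i : Fin (n+2)):ℕ)+1
    rw [hiI_val, loI_val])

lemma loI_lt (i : Fin (n+2)) : ((loI he i : Fin (n+2)):ℕ)+1 < n+2 := by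
  have := (hiI he i).2
  rw [hiI_val] at this
  rw [loI_val]; omega

/-! ### Invariance of FF under the folding -/

lemma swap_outside (x : TopSimplex (n+1)) (i i' : Fin (n+2)) (h : (i':ℕ)/2 ≠ (i:ℕ)/2) :
    Av he (swapF (loI he i) (hiI he i) x) i' = Av he x i' ∧
    Bv he (swapF (loI he i) (hiI he i) x) i' = Bv he x i' := by
  constructor
  · unfold Av
    rw [swapF_apply, Equiv.swap_apply_of_ne_of_ne]
    · rw [Fin.ne_iff_vne, loI_val, loI_val]; omega
    · rw [Fin.ne_iff_vne, loI_val, hiI_val]; omega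
  · unfold Bv
    rw [swapF_apply, Equiv.swap_apply_of_ne_of_ne]
    · rw [Fin.ne_iff_vne, hiI_val, loI_val]; omega
    · rw [Fin.ne_iff_vne, hiI_val, hiI_val]; omega

lemma swap_inside (x : TopSimplex (n+1)) (i i' : Fin (n+2)) (h : (i':ℕ)/2 = (i:ℕ)/2) :
    Av he (swapF (loI he i) (hiI he i) x) i' = Bv he x i' ∧
    Bv he (swapF (loI he i) (hiI he i) x) i' = Av he x i' := by
  constructor
  · unfold Av
    rw [loI_congr he h, swapF_apply, Equiv.swap_apply_left]
    unfold Bv; rw [hiI_congr he h]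
  · unfold Bv
    rw [hiI_congr he h, swapF_apply, Equiv.swap_apply_right]
    unfold Av; rw [loI_congr he h]

lemma fF_swap (x : TopSimplex (n+1)) (i : Fin (n+2)) (hz : Av he x i = 0) :
    fF he (swapF (loI he i) (hiI he i) x) = fF he x := by
  funext i'
  unfold fF
  rcases eq_or_ne ((i':ℕ)/2) ((i:ℕ)/2) with h | h
  · obtain ⟨hA, hB⟩ := swap_inside he x i i' h
    have hz' : Av he x i' = 0 := by rw [Av_congr he x h]; exact hz
    rw [hA, hB, hz']
    have hBz : Bv he x i' ≥ 0 := Bv_nonneg he x i'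
    split_ifs
    · rw [show gg1 (Bv he x i') 0 = gg1 0 (Bv he x i') from gg1_swap _]
    · rw [show gg2 (Bv he x i') 0 = gg2 0 (Bv he x i') from gg2_swap _]
  · obtain ⟨hA, hB⟩ := swap_outside he x i i' h
    rw [hA, hB]

lemma FF_swap (x : TopSimplex (n+1)) (i : Fin (n+2)) (hz : Av he x i = 0) :
    FF he (swapF (loI he i) (hiI he i) x) = FF he x := by
  unfold FF Nf
  rw [fF_swap he x i hz]

/-! ### Pair relation from equality of foldings -/

lemma pair_rel (x y : TopSimplex (n+1)) (hf : fF he x = fF he y) (i : Fin (n+2)) :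
    (Av he x i = Av he y i ∧ Bv he x i = Bv he y i) ∨
    (Av he x i = Bv he y i ∧ Bv he x i = Av he y i ∧ Av he x i * Bv he x i = 0) := by
  have hlo : ((loI he i : Fin (n+2)):ℕ) % 2 = 0 := by rw [loI_val]; omega
  have hhi : ¬ ((hiI he i : Fin (n+2)):ℕ) % 2 = 0 := by rw [hiI_val]; omega
  have h1 := congrFun hf (loI he i)
  have h2 := congrFun hf (hiI he i)
  unfold fF at h1 h2
  simp only [if_pos hlo] at h1
  simp only [if_neg hhi] at h2
  rw [Av_congr he x (loI_div he i), Bv_congr he x (loI_div he i),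
    Av_congr he y (loI_div he i), Bv_congr he y (loI_div he i)] at h1
  rw [Av_congr he x (hiI_div he i), Bv_congr he x (hiI_div he i),
    Av_congr he y (hiI_div he i), Bv_congr he y (hiI_div he i)] at h2
  exact gg_inj (Av_nonneg he x i) (Bv_nonneg he x i) (Av_nonneg he y i) (Bv_nonneg he y i) h1 h2

lemma eq_of_pairs (x y : TopSimplex (n+1))
    (hrel : ∀ i, Av he x i = Av he y i ∧ Bv he x i = Bv he y i) : x = y := by
  have key : ∀ i : Fin (n+2), x i = y i := by
    intro i
    have hc : (x i : ℝ) = (y i : ℝ) := by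
      rcases Nat.even_or_odd (i:ℕ) with h | h
      · have h0 := Nat.even_iff.1 h
        have := (hrel i).1
        unfold Av at this
        rwa [loI_of_even he h0] at this
      · have h0 := Nat.odd_iff.1 h
        have := (hrel i).2
        unfold Bv at this
        rwa [hiI_of_odd he h0] at this
    exact NNReal.coe_injective hc
  apply Subtype.ext; funext i
  exact key i

/-! ### From equal foldings to equal points in the model space -/

include hπ in
lemma quot_of_rel : ∀ (k : ℕ) (x y : TopSimplex (n+1)),
    (∀ i, (Av he x i = Av he y i ∧ Bv he x i = Bv he y i) ∨
      (Av he x i = Bv he y i ∧ Bv he x i = Av he y i ∧ Av he x i * Bv he x i = 0)) →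
    (Finset.univ.filter
      (fun i => ¬(Av he x i = Av he y i ∧ Bv he x i = Bv he y i))).card ≤ k →
    Quot.mk (matchRel n π) x = Quot.mk _ y := by
  intro k
  induction k with
  | zero =>
    intro x y hrel hcard
    have hD : (Finset.univ.filter
        (fun i => ¬(Av he x i = Av he y i ∧ Bv he x i = Bv he y i))) = ∅ :=
      Finset.card_eq_zero.1 (Nat.le_zero.1 hcard)
    have : ∀ i, Av he x i = Av he y i ∧ Bv he x i = Bv he y i := by
      intro i
      by_contra hc
      have : i ∈ (∅ : Finset (Fin (n+2))) := hD ▸ Finset.mem_filter.2 ⟨Finset.mem_univ i, hc⟩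
      exact absurd this (Finset.notMem_empty i)
    rw [eq_of_pairs he x y this]
  | succ k ih =>
    intro x y hrel hcard
    set D := Finset.univ.filter
      (fun i => ¬(Av he x i = Av he y i ∧ Bv he x i = Bv he y i)) with hDdef
    rcases Finset.eq_empty_or_nonempty D with hD | ⟨i, hi⟩
    · have : ∀ i, Av he x i = Av he y i ∧ Bv he x i = Bv he y i := by
        intro i
        by_contra hc
        have : i ∈ (∅ : Finset (Fin (n+2))) := hD ▸ Finset.mem_filter.2 ⟨Finset.mem_univ i, hc⟩
        exact absurd this (Finset.notMem_empty i)
      rw [eq_of_pairs he x y this]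
    · have hiD : ¬(Av he x i = Av he y i ∧ Bv he x i = Bv he y i) :=
        (Finset.mem_filter.1 hi).2
      obtain ⟨hA, hB, h0⟩ := (hrel i).resolve_left hiD
      set p := loI he i with hpdef
      set p' := hiI he i with hp'def
      have hpe : (p:ℕ) % 2 = 0 := by rw [hpdef, loI_val]; omega
      have hp1 : (p:ℕ)+1 < n+2 := loI_lt he i
      have hp'mk : p' = ⟨(p:ℕ)+1, hp1⟩ := hiI_eq_mk he i hp1
      have hzero : x p = 0 ∨ x p' = 0 := by
        rcases mul_eq_zero.1 h0 with h | h
        · left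
          have : (x p : ℝ) = 0 := h
          exact_mod_cast this
        · right
          have : (x p' : ℝ) = 0 := h
          exact_mod_cast this
      have hq : Quot.mk (matchRel n π) x = Quot.mk _ (swapF p p' x) := by
        rw [hp'mk] at hzero ⊢
        exact quot_eq_swap π hπ p hpe hp1 x hzero
      set x' := swapF p p' x with hx'def
      have hrel' : ∀ i', (Av he x' i' = Av he y i' ∧ Bv he x' i' = Bv he y i') ∨
          (Av he x' i' = Bv he y i' ∧ Bv he x' i' = Av he y i' ∧ Av he x' i' * Bv he x' i' = 0) := by
        intro i'
        rcases eq_or_ne ((i':ℕ)/2) ((i:ℕ)/2) with h | h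
        · left
          obtain ⟨hA', hB'⟩ := swap_inside he x i i' h
          constructor
          · rw [hA', Bv_congr he x h, hB]; exact (Av_congr he y h).symm
          · rw [hB', Av_congr he x h, hA]; exact (Bv_congr he y h).symm
        · obtain ⟨hA', hB'⟩ := swap_outside he x i i' h
          rw [hA', hB']
          exact hrel i'
      have hcard' : (Finset.univ.filter
          (fun i' => ¬(Av he x' i' = Av he y i' ∧ Bv he x' i' = Bv he y i'))).card ≤ k := by
        have hsub : (Finset.univ.filter
            (fun i' => ¬(Av he x' i' = Av he y i' ∧ Bv he x' i' = Bv he y i'))) ⊆ D.erase i := by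
          intro i' hi'
          have hmem := (Finset.mem_filter.1 hi').2
          rcases eq_or_ne ((i':ℕ)/2) ((i:ℕ)/2) with h | h
          · exfalso
            obtain ⟨hA', hB'⟩ := swap_inside he x i i' h
            apply hmem
            constructor
            · rw [hA', Bv_congr he x h, hB]; exact (Av_congr he y h).symm
            · rw [hB', Av_congr he x h, hA]; exact (Bv_congr he y h).symm
          · obtain ⟨hA', hB'⟩ := swap_outside he x i i' h
            rw [Finset.mem_erase]
            constructor
            · intro hcon; exact h (by rw [hcon])
            · refine Finset.mem_filter.2 ⟨Finset.mem_univ i', ?_⟩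
              rw [hA', hB'] at hmem
              exact hmem
        calc (Finset.univ.filter _).card ≤ (D.erase i).card := Finset.card_le_card hsub
          _ = D.card - 1 := Finset.card_erase_of_mem hi
          _ ≤ k := by omega
      rw [hq]
      exact ih x' y hrel' hcard'

/-! ### Injectivity ingredients -/

lemma sv_FF (x : TopSimplex (n+1)) (i : Fin (n+2)) :
    (FF he x i)^2 + (FF he x (ptr he i))^2 = sv he x i ^ 4 / Nf he x ^2 := by
  unfold FF
  rw [div_pow, div_pow, ← add_div, pair_sq]

lemma fF_eq_of_FF_eq {x y : TopSimplex (n+1)} (h : FF he x = FF he y) :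
    fF he x = fF he y := by
  have hNx := Nf_pos he x
  have hNy := Nf_pos he y
  have happ : ∀ i, FF he x i = FF he y i := fun i => congrArg (fun z => z i) h
  have hsv4 : ∀ i, sv he x i^4 * Nf he y^2 = sv he y i^4 * Nf he x^2 := by
    intro i
    have h1 := sv_FF he x i
    have h2 := sv_FF he y i
    rw [happ i, happ (ptr he i)] at h1
    have h3 : sv he x i ^ 4 / Nf he x ^2 = sv he y i ^ 4 / Nf he y ^2 := by rw [← h1, h2]
    rw [div_eq_div_iff (by positivity) (by positivity)] at h3
    exact h3
  set c := Real.sqrt (Nf he x / Nf he y) with hc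
  have hc2 : c^2 = Nf he x / Nf he y := Real.sq_sqrt (by positivity)
  have hsvc : ∀ i, sv he x i = c * sv he y i := by
    intro i
    apply pow4_inj (sv_nonneg he x i)
      (mul_nonneg (Real.sqrt_nonneg _) (sv_nonneg he y i))
    have hc4 : c^4 = Nf he x^2/Nf he y^2 := by
      rw [show (4:ℕ) = 2*2 from rfl, pow_mul, hc2, div_pow]
    rw [mul_pow, hc4, div_mul_eq_mul_div, eq_div_iff (by positivity)]
    linear_combination hsv4 i
  have hsum : (2:ℝ) = c * 2 := by
    have h1 := sum_sv he x
    rw [Finset.sum_congr rfl (fun i _ => hsvc i), ← Finset.mul_sum, sum_sv he y] at h1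
    linarith
  have hc1 : c = 1 := by linarith
  have hN : Nf he x = Nf he y := by
    have h2 := hc2
    rw [hc1] at h2
    field_simp at h2
    linarith
  funext i
  have h3 := happ i
  unfold FF at h3
  rw [hN, div_eq_div_iff hNy.ne' hNy.ne'] at h3
  exact mul_right_cancel₀ hNy.ne' h3

include hπ in
lemma FF_resp (x y : TopSimplex (n+1)) (hr : matchRel n π x y) : FF he x = FF he y := by
  obtain ⟨j, hje, t, hx, hy⟩ := hr
  have hje' : (j:ℕ) % 2 = 0 := Nat.even_iff.1 hje
  have hj1 : (j:ℕ)+1 < n+2 := by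
    have h2 := (π j).2
    rwa [hπ j hje] at h2
  have hπj : π j = ⟨(j:ℕ)+1, hj1⟩ := Fin.ext (hπ j hje)
  have hjlo : loI he j = j := loI_of_even he hje'
  have hjhi : hiI he j = ⟨(j:ℕ)+1, hj1⟩ := Fin.ext (by
    show ((hiI he j : Fin (n+2)):ℕ) = (j:ℕ)+1
    rw [hiI_val]; omega)
  have hyx : y = swapF (loI he j) (hiI he j) x := by
    rw [hjlo, hjhi, hy, hπj, hx]
    exact (face_eq_swap j hj1 t).symm
  have hz : Av he x j = 0 := by
    unfold Av
    rw [hjlo, hx, faceIncl_self]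
    simp
  rw [hyx, FF_swap he x j hz]

/-! ### Surjectivity -/

set_option maxHeartbeats 2000000 in
lemma FF_surj (y : EuclideanSpace ℝ (Fin (n+2))) (hy : ∑ i : Fin (n+2), (y i)^2 = 1) :
    ∃ x : TopSimplex (n+1), FF he x = y := by
  classical
  set uu : Fin (n+2) → ℝ := fun i => y (loI he i) with huu
  set vv : Fin (n+2) → ℝ := fun i => y (hiI he i) with hvv
  set rr : Fin (n+2) → ℝ := fun i => Real.sqrt (uu i^2 + vv i^2) with hrr
  have hrr0 : ∀ i, 0 ≤ rr i := fun i => Real.sqrt_nonneg _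
  have huuc : ∀ (i i' : Fin (n+2)), ((i:ℕ))/2 = ((i':ℕ))/2 → uu i = uu i' := by
    intro i i' h; rw [huu]; simp only; rw [loI_congr he h]
  have hvvc : ∀ (i i' : Fin (n+2)), ((i:ℕ))/2 = ((i':ℕ))/2 → vv i = vv i' := by
    intro i i' h; rw [hvv]; simp only; rw [hiI_congr he h]
  have hrrc : ∀ (i i' : Fin (n+2)), ((i:ℕ))/2 = ((i':ℕ))/2 → rr i = rr i' := by
    intro i i' h; rw [hrr]; simp only; rw [huuc i i' h, hvvc i i' h]
  have hrr2 : ∀ i, rr i ^ 2 = uu i^2 + vv i^2 := fun i => Real.sq_sqrt (by positivity)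
  -- y-pairing
  have hyy : ∀ i, uu i^2 + vv i^2 = (y i)^2 + (y (ptr he i))^2 := by
    intro i
    rcases Nat.even_or_odd (i:ℕ) with h | h
    · rw [huu, hvv]; simp only
      rw [loI_of_even he (Nat.even_iff.1 h), hiI_of_even he (Nat.even_iff.1 h)]
    · rw [huu, hvv]; simp only
      rw [loI_of_odd he (Nat.odd_iff.1 h), hiI_of_odd he (Nat.odd_iff.1 h)]
      ring
  have hsumrr : ∑ i : Fin (n+2), rr i ^2 = 2 := by
    have h1 : ∑ i : Fin (n+2), rr i ^2
        = ∑ i : Fin (n+2), ((y i)^2 + (y (ptrE he i))^2) :=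
      Finset.sum_congr rfl fun i _ => by rw [hrr2, hyy]; rfl
    rw [h1, Finset.sum_add_distrib, hy, Equiv.sum_comp (ptrE he) (fun i => (y i)^2), hy]
    norm_num
  set T : ℝ := ∑ i : Fin (n+2), Real.sqrt (rr i) with hT
  have hTpos : 0 < T := by
    have hex : ∃ i : Fin (n+2), 0 < rr i := by
      by_contra hc
      push_neg at hc
      have h0 : ∀ i : Fin (n+2), rr i ^ 2 = 0 := fun i =>
        by have := le_antisymm (hc i) (hrr0 i); rw [this]; ring
      rw [Finset.sum_congr rfl fun i _ => h0 i] at hsumrr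
      simp at hsumrr
    obtain ⟨i, hi⟩ := hex
    refine Finset.sum_pos' (fun j _ => Real.sqrt_nonneg _) ⟨i, Finset.mem_univ i, ?_⟩
    exact Real.sqrt_pos.2 hi
  set ss : Fin (n+2) → ℝ := fun i => 2*Real.sqrt (rr i)/T with hss
  have hss0 : ∀ i, 0 ≤ ss i := fun i => by rw [hss]; positivity
  have hss2 : ∀ i, ss i ^2 = 4 * rr i/T^2 := by
    intro i
    rw [hss]; simp only
    rw [div_pow, mul_pow, Real.sq_sqrt (hrr0 i)]
    norm_num
  have hssc : ∀ (i i' : Fin (n+2)), ((i:ℕ))/2 = ((i':ℕ))/2 → ss i = ss i' := by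
    intro i i' h; rw [hss]; simp only; rw [hrrc i i' h]
  have hzero : ∀ i, rr i = 0 → uu i = 0 ∧ vv i = 0 ∧ ss i = 0 := by
    intro i h
    have h1 : uu i^2 + vv i^2 ≤ 0 := Real.sqrt_eq_zero'.1 h
    have h2 : uu i = 0 := by nlinarith [sq_nonneg (uu i), sq_nonneg (vv i)]
    have h3 : vv i = 0 := by nlinarith [sq_nonneg (uu i), sq_nonneg (vv i)]
    refine ⟨h2, h3, ?_⟩
    rw [hss]; simp only
    rw [h, Real.sqrt_zero]
    ring
  -- the point of the simplex
  set xr : Fin (n+2) → ℝ := fun i =>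
    if (i:ℕ)%2 = 0 then aa (uu i) (vv i) (ss i) else bb (uu i) (vv i) (ss i) with hxr
  have haabb : ∀ i, 0 ≤ aa (uu i) (vv i) (ss i) ∧ 0 ≤ bb (uu i) (vv i) (ss i) ∧
      aa (uu i) (vv i) (ss i) + bb (uu i) (vv i) (ss i) = ss i := by
    intro i
    rcases eq_or_lt_of_le (hrr0 i) with h | h
    · obtain ⟨h1, h2, h3⟩ := hzero i h.symm
      obtain ⟨z1, z2⟩ := aabb_zero (uu i) (vv i)
      rw [h3, z1, z2]
      norm_num
    · obtain ⟨c1, c2, c3, _, _⟩ := surj_helper (uu i) (vv i) (ss i) (hss0 i) h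
      exact ⟨c1, c2, c3⟩
  have hxr0 : ∀ i, 0 ≤ xr i := by
    intro i
    rw [hxr]; simp only
    split_ifs
    · exact (haabb i).1
    · exact (haabb i).2.1
  have hxrpair : ∀ i, xr i + xr (ptr he i) = ss i := by
    intro i
    have hd := ptr_div he i
    rcases Nat.even_or_odd (i:ℕ) with h | h
    · have h0 := Nat.even_iff.1 h
      rw [hxr]; simp only
      rw [if_pos h0, if_neg (by rw [ptr_parity he i h0]; omega)]
      rw [huuc _ i hd, hvvc _ i hd, hssc _ i hd]
      exact (haabb i).2.2
    · have h0 := Nat.odd_iff.1 h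
      rw [hxr]; simp only
      rw [if_neg (by omega), if_pos (ptr_parity' he i h0)]
      rw [huuc _ i hd, hvvc _ i hd, hssc _ i hd]
      rw [add_comm]
      exact (haabb i).2.2
  have hsumss : ∑ i : Fin (n+2), ss i = 2 := by
    rw [hss]
    simp only
    rw [← Finset.sum_div, ← Finset.mul_sum, ← hT]
    field_simp
  have hsumxr : ∑ i : Fin (n+2), xr i = 1 := by
    have h1 : ∑ i : Fin (n+2), (xr i + xr (ptrE he i)) = ∑ i : Fin (n+2), ss i :=
      Finset.sum_congr rfl fun i _ => hxrpair i
    rw [Finset.sum_add_distrib, Equiv.sum_comp (ptrE he) xr, hsumss] at h1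
    linarith
  set x : TopSimplex (n+1) := ⟨fun i => Real.toNNReal (xr i), by
    show ∑ i : Fin (n+2), Real.toNNReal (xr i) = 1
    apply NNReal.coe_injective
    push_cast
    rw [Finset.sum_congr rfl fun i _ => Real.coe_toNNReal (xr i) (hxr0 i)]
    exact hsumxr⟩ with hx
  -- identification of Av, Bv
  have hAv : ∀ i, Av he x i = aa (uu i) (vv i) (ss i) := by
    intro i
    have hlo : ((loI he i : Fin (n+2)):ℕ) % 2 = 0 := by rw [loI_val]; omega
    have hd := loI_div he i
    unfold Av
    rw [hx]
    show ((Real.toNNReal (xr (loI he i)) : ℝ≥0) : ℝ) = _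
    rw [Real.coe_toNNReal _ (hxr0 _), hxr]
    simp only
    rw [if_pos hlo, huuc _ i hd, hvvc _ i hd, hssc _ i hd]
  have hBv : ∀ i, Bv he x i = bb (uu i) (vv i) (ss i) := by
    intro i
    have hhi : ¬ ((hiI he i : Fin (n+2)):ℕ) % 2 = 0 := by rw [hiI_val]; omega
    have hd := hiI_div he i
    unfold Bv
    rw [hx]
    show ((Real.toNNReal (xr (hiI he i)) : ℝ≥0) : ℝ) = _
    rw [Real.coe_toNNReal _ (hxr0 _), hxr]
    simp only
    rw [if_neg hhi, huuc _ i hd, hvvc _ i hd, hssc _ i hd]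
  have hsv : ∀ i, sv he x i = ss i := by
    intro i
    unfold sv
    rw [hAv, hBv]
    exact (haabb i).2.2
  -- the norm
  have hNf : Nf he x = 4/T^2 := by
    have h2N := two_Nf_sq he x
    rw [Finset.sum_congr rfl (fun i _ => by rw [hsv i])] at h2N
    have hss4 : ∀ i, ss i^4 = 16 * rr i^2 / T^4 := by
      intro i
      have := hss2 i
      have h4 : ss i^4 = (ss i^2)^2 := by ring
      rw [h4, this]
      field_simp
      ring
    rw [Finset.sum_congr rfl (fun i _ => hss4 i)] at h2N
    rw [← Finset.sum_div, ← Finset.mul_sum, hsumrr] at h2N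
    have hN2 : Nf he x ^2 = 16/T^4 := by
      rw [eq_div_iff (by positivity)] at h2N ⊢
      linarith
    apply pow4_inj (Nf_pos he x).le (by positivity)
    have e1 : Nf he x^4 = (Nf he x^2)^2 := by ring
    rw [e1, hN2]
    field_simp
    ring
  refine ⟨x, PiLp.ext fun i => ?_⟩
  show fF he x i / Nf he x = y i
  rcases Nat.even_or_odd (i:ℕ) with h | h
  · have h0 := Nat.even_iff.1 h
    have hyi : y i = uu i := by rw [huu]; simp only; rw [loI_of_even he h0]
    unfold fF
    rw [if_pos h0, hAv, hBv]
    rcases eq_or_lt_of_le (hrr0 i) with hr | hr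
    · obtain ⟨h1, h2, h3⟩ := hzero i hr.symm
      obtain ⟨z1, z2⟩ := aabb_zero (uu i) (vv i)
      rw [h3, z1, z2, hyi, h1]
      unfold gg1
      norm_num
    · obtain ⟨_, _, _, c4, _⟩ := surj_helper (uu i) (vv i) (ss i) (hss0 i) hr
      rw [show Real.sqrt (uu i^2 + vv i^2) = rr i from rfl] at c4
      rw [c4, hNf, hss2, hyi]
      rw [div_div_eq_mul_div, div_mul_eq_mul_div, div_div]
      rw [div_eq_iff (by positivity)]
      field_simp
  · have h0 := Nat.odd_iff.1 h
    have hyi : y i = vv i := by rw [hvv]; simp only; rw [hiI_of_odd he h0]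
    unfold fF
    rw [if_neg (by omega), hAv, hBv]
    rcases eq_or_lt_of_le (hrr0 i) with hr | hr
    · obtain ⟨h1, h2, h3⟩ := hzero i hr.symm
      obtain ⟨z1, z2⟩ := aabb_zero (uu i) (vv i)
      rw [h3, z1, z2, hyi, h2]
      unfold gg2
      norm_num
    · obtain ⟨_, _, _, _, c5⟩ := surj_helper (uu i) (vv i) (ss i) (hss0 i) hr
      rw [show Real.sqrt (uu i^2 + vv i^2) = rr i from rfl] at c5
      rw [c5, hNf, hss2, hyi]
      rw [div_div_eq_mul_div, div_mul_eq_mul_div, div_div]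
      rw [div_eq_iff (by positivity)]
      field_simp

/-! ### Continuity -/

lemma FF_cont : Continuous (fun x : TopSimplex (n+1) => FF he x) := by
  have hA : ∀ i : Fin (n+2), Continuous fun x : TopSimplex (n+1) => Av he x i := by
    intro i
    exact NNReal.continuous_coe.comp
      ((continuous_apply ((loI he i : Fin (n+2)))).comp continuous_subtype_val)
  have hB : ∀ i : Fin (n+2), Continuous fun x : TopSimplex (n+1) => Bv he x i := by
    intro i
    exact NNReal.continuous_coe.comp
      ((continuous_apply ((hiI he i : Fin (n+2)))).comp continuous_subtype_val)
  have hfi : ∀ i : Fin (n+2), Continuous fun x : TopSimplex (n+1) => fF he x i := by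
    intro i
    unfold fF
    rcases Nat.even_or_odd (i:ℕ) with h | h
    · simp only [if_pos (Nat.even_iff.1 h)]
      unfold gg1
      continuity
    · have h0 := Nat.odd_iff.1 h
      simp only [if_neg (show ¬ (i:ℕ)%2 = 0 by omega)]
      unfold gg2
      exact ((continuous_const.mul ((hB i).sub (hA i))).mul
        (Real.continuous_sqrt.comp ((hA i).mul (hB i))))
  have hN : Continuous fun x : TopSimplex (n+1) => Nf he x :=
    Real.continuous_sqrt.comp (continuous_finset_sum _ fun i _ => (hfi i).pow 2)
  exact (PiLp.continuousLinearEquiv 2 ℝ (fun _ : Fin (n+2) => ℝ)).symm.continuous.comp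
    (continuous_pi fun i => (hfi i).div hN fun x => (Nf_pos he x).ne')

/-! ### The final map -/

def Gs (x : TopSimplex (n+1)) : Metric.sphere (0 : EuclideanSpace ℝ (Fin (n+2))) 1 :=
  ⟨FF he x, by rw [mem_sphere_zero_iff_norm]; exact norm_FF he x⟩

include hπ in
lemma Gs_resp : ∀ a b, matchRel n π a b → Gs he a = Gs he b := fun a b h =>
  Subtype.ext (FF_resp (π := π) (hπ := hπ) (he := he) a b h)

def Ls (hπ : ∀ j : Fin (n + 2), Even (j : ℕ) → (π j : ℕ) = (j : ℕ) + 1) :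
    ModelSpace n π → Metric.sphere (0 : EuclideanSpace ℝ (Fin (n+2))) 1 :=
  Quot.lift (Gs he) (Gs_resp (π := π) (hπ := hπ) (he := he))

include hπ in
lemma Ls_bij : Function.Bijective (Ls (n := n) (π := π) he hπ) := by
  constructor
  · rintro ⟨x⟩ ⟨y⟩ h
    have hFF : FF he x = FF he y := congrArg Subtype.val h
    have hfF := fF_eq_of_FF_eq he hFF
    exact quot_of_rel (π := π) (hπ := hπ) (he := he) (Finset.univ.card) x y
      (fun i => pair_rel he x y hfF i) (Finset.card_le_card (Finset.subset_univ _))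
  · rintro ⟨z, hz⟩
    have hz1 : ∑ i : Fin (n+2), (z i)^2 = 1 := by
      rw [mem_sphere_zero_iff_norm, EuclideanSpace.norm_eq] at hz
      have h2 := Real.sqrt_eq_one.1 hz
      calc ∑ i : Fin (n+2), (z i)^2 = ∑ i : Fin (n+2), ‖z i‖^2 := by
            refine Finset.sum_congr rfl fun i _ => ?_
            rw [Real.norm_eq_abs, sq_abs]
        _ = 1 := h2
    obtain ⟨x, hx⟩ := FF_surj he z hz1
    exact ⟨Quot.mk _ x, Subtype.ext hx⟩

include hπ in
lemma Ls_cont : Continuous (Ls (n := n) (π := π) he hπ) :=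
  continuous_quot_lift _ ((FF_cont he).subtype_mk _)

end S6
end


theorem stmt6 (n : ℕ) (hn : Odd (n + 1)) (π : Fin (n + 2) → Fin (n + 2))
    (hπ : ∀ j : Fin (n + 2), Even (j : ℕ) → (π j : ℕ) = (j : ℕ) + 1) :
    Nonempty (ModelSpace n π ≃ₜ Metric.sphere (0 : EuclideanSpace ℝ (Fin (n + 2))) 1) := by
  have he : n % 2 = 0 := by obtain ⟨k, hk⟩ := hn; omega
  haveI : CompactSpace (ModelSpace n π) := Quot.compactSpace
  refine ⟨Continuous.homeoOfEquivCompactToT2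
    (f := Equiv.ofBijective _ (S6.Ls_bij (π := π) (hπ := hπ) (he := he))) ?_⟩
  exact S6.Ls_cont (π := π) (hπ := hπ) (he := he)
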